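/- For κ = 42² and real w_x, w_y, ρ, ρ_x, ρ_y, the solution (S₁₃, S₂₃) of the linear system (κ + 10(w_x²+w_y²) + 36w_x²)S₁₃ + 36w_x w_y S₂₃ = (κ/30)(w_x ρ + ρ_x/3), 36w_x w_y S₁₃ + (κ + 10(w_x²+w_y²) + 36w_y²)S₂₃ = (κ/30)(w_y ρ + ρ_y/3) is given by (S₁₃, S₂₃) = D(∇w) · (κ/30)·(w_x ρ + ρ_x/3, w_y ρ + ρ_y/3), where D(∇w) = (1/(κ+10|∇w|²))[I - (36/(κ+46|∇w|²))∇w⊗∇w] and ∇w = (w_x, w_y). -/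

import Mathlib

open Matrix

/-- The diffusion matrix `D(∇w) = (1/(κ + 10|∇w|²))·[I - (36/(κ + 46|∇w|²))·∇w⊗∇w]`, `κ = 42²`. -/
noncomputable def Dmat (g : Fin 2 → ℝ) : Matrix (Fin 2) (Fin 2) ℝ :=
  ((42 ^ 2 + 10 * (g 0 ^ 2 + g 1 ^ 2) : ℝ)⁻¹) •
    ((1 : Matrix (Fin 2) (Fin 2) ℝ) -
      ((36 / (42 ^ 2 + 46 * (g 0 ^ 2 + g 1 ^ 2)) : ℝ)) • vecMulVec g g)

/-- For `κ = 42²`, any solution `(S₁₃, S₂₃)` of the algebraic local-equilibrium system for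
rectilinear flow is given by `(S₁₃, S₂₃) = D(∇w)·(κ/30)·(wₓρ + ρₓ/3, w_yρ + ρ_y/3)`. -/
theorem rectilinear_equilibrium_S (wx wy ρ ρx ρy S13 S23 : ℝ)
    (h1 : (42 ^ 2 + 10 * (wx ^ 2 + wy ^ 2) + 36 * wx ^ 2) * S13 + 36 * wx * wy * S23 =
      42 ^ 2 / 30 * (wx * ρ + ρx / 3))
    (h2 : 36 * wx * wy * S13 + (42 ^ 2 + 10 * (wx ^ 2 + wy ^ 2) + 36 * wy ^ 2) * S23 =
      42 ^ 2 / 30 * (wy * ρ + ρy / 3)) :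
    ![S13, S23] = (Dmat ![wx, wy]).mulVec
      ((42 ^ 2 / 30 : ℝ) • ![wx * ρ + ρx / 3, wy * ρ + ρy / 3]) := by
  have hA : (42 ^ 2 + 10 * (wx ^ 2 + wy ^ 2) : ℝ) ≠ 0 := by positivity
  have hB : (42 ^ 2 + 46 * (wx ^ 2 + wy ^ 2) : ℝ) ≠ 0 := by positivity
  funext i
  fin_cases i
  · simp only [Dmat, mulVec, dotProduct, vecMulVec, Matrix.one_apply, Fin.sum_univ_two,
      Matrix.sub_apply, Matrix.smul_apply, Matrix.of_apply, Matrix.cons_val_zero,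
      Matrix.cons_val_one, Matrix.head_cons, Pi.smul_apply, smul_eq_mul,
      Fin.zero_eta, Fin.mk_one, Fin.isValue, one_ne_zero, zero_ne_one, ↓reduceIte]
    field_simp
    linear_combination (90 * (42 ^ 2 + 10 * (wx ^ 2 + wy ^ 2) + 36 * wy ^ 2)) * h1 -
      (90 * 36 * wx * wy) * h2
  · simp only [Dmat, mulVec, dotProduct, vecMulVec, Matrix.one_apply, Fin.sum_univ_two,
      Matrix.sub_apply, Matrix.smul_apply, Matrix.of_apply, Matrix.cons_val_zero,
      Matrix.cons_val_one, Matrix.head_cons, Pi.smul_apply, smul_eq_mul,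
      Fin.zero_eta, Fin.mk_one, Fin.isValue, one_ne_zero, zero_ne_one, ↓reduceIte]
    field_simp
    linear_combination (90 * (42 ^ 2 + 10 * (wx ^ 2 + wy ^ 2) + 36 * wx ^ 2)) * h2 -
      (90 * 36 * wx * wy) * h1
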